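/- A surjective linear map U on a normed real vector space V is an isometry if and only if there exists a semi-inner product [·,·] generating the norm such that [U x, U y] = [x, y] for all x, y ∈ V. -/

import Mathlib

open Filter Finset Topology

/-- Every real normed space admits a semi-inner product generating the norm. -/
theorem exists_sip_aux (V : Type*) [NormedAddCommGroup V] [NormedSpace ℝ V] :
    ∃ s : V → V → ℝ,
      (∀ x y z : V, s (x + y) z = s x z + s y z) ∧
      (∀ (c : ℝ) (x y : V), s (c • x) y = c * s x y) ∧
      (∀ x : V, s x x = ‖x‖ ^ 2) ∧
      (∀ x y : V, |s x y| ≤ ‖x‖ * ‖y‖) := by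
  have h : ∀ y : V, ∃ g : V →L[ℝ] ℝ, ‖g‖ ≤ 1 ∧ g y = ‖y‖ := fun y =>
    exists_dual_vector'' ℝ y
  choose f hf1 hf2 using h
  refine ⟨fun x y => ‖y‖ * f y x, ?_, ?_, ?_, ?_⟩
  · intro x y z; dsimp only; rw [map_add]; ring
  · intro c x y; dsimp only; rw [map_smul, smul_eq_mul]; ring
  · intro x; dsimp only; rw [hf2]; ring
  · intro x y
    rw [abs_mul, abs_of_nonneg (norm_nonneg y)]
    have h1 : |f y x| ≤ ‖f y‖ * ‖x‖ := by
      simpa [Real.norm_eq_abs] using (f y).le_opNorm x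
    have h2 : ‖f y‖ * ‖x‖ ≤ 1 * ‖x‖ :=
      mul_le_mul_of_nonneg_right (hf1 y) (norm_nonneg x)
    calc ‖y‖ * |f y x| ≤ ‖y‖ * (1 * ‖x‖) :=
          mul_le_mul_of_nonneg_left (h1.trans h2) (norm_nonneg y)
      _ = ‖x‖ * ‖y‖ := by ring

/-- A surjective linear map `U` on a real normed space is an isometry iff there
is a semi-inner product generating the norm which is preserved by `U`. -/
theorem isometry_iff_preserves_some_sip
    {V : Type*} [NormedAddCommGroup V] [NormedSpace ℝ V]
    (U : V →ₗ[ℝ] V) (hU : Function.Surjective U) :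
    (∀ x : V, ‖U x‖ = ‖x‖) ↔
    ∃ sip : V → V → ℝ,
      (∀ x y z : V, sip (x + y) z = sip x z + sip y z) ∧
      (∀ (c : ℝ) (x y : V), sip (c • x) y = c * sip x y) ∧
      (∀ x : V, sip x x = ‖x‖ ^ 2) ∧
      (∀ x y : V, |sip x y| ≤ ‖x‖ * ‖y‖) ∧
      (∀ x y : V, sip (U x) (U y) = sip x y) := by
  constructor
  · intro hiso
    obtain ⟨s, hsadd, hssmul, hsself, hsbd⟩ := exists_sip_aux V
    -- iterates of U preserve norms
    have hpow : ∀ (n : ℕ) (x : V), ‖(U ^ n) x‖ = ‖x‖ := by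
      intro n
      induction n with
      | zero => intro x; simp
      | succ n ih =>
          intro x
          rw [pow_succ', Module.End.mul_apply, hiso, ih]
    -- the sequence of pushed-forward semi-inner products
    set seq : V → V → ℕ → ℝ := fun x y n => s ((U ^ n) x) ((U ^ n) y) with hseq
    have hseqadd : ∀ x y z n, seq (x + y) z n = seq x z n + seq y z n := by
      intro x y z n; simp only [hseq, map_add, hsadd]
    have hseqsmul : ∀ (c : ℝ) x y n, seq (c • x) y n = c * seq x y n := by
      intro c x y n; simp only [hseq, map_smul, hssmul]
    have hseqself : ∀ x n, seq x x n = ‖x‖ ^ 2 := by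
      intro x n; simp only [hseq, hsself, hpow]
    have hseqbd : ∀ x y n, |seq x y n| ≤ ‖x‖ * ‖y‖ := by
      intro x y n
      simpa only [hseq, hpow] using hsbd ((U ^ n) x) ((U ^ n) y)
    have hseqshift : ∀ x y n, seq (U x) (U y) n = seq x y (n + 1) := by
      intro x y n
      simp only [hseq, pow_succ, Module.End.mul_apply]
    -- Cesàro averages
    set avg : V → V → ℕ → ℝ :=
      fun x y N => (∑ n ∈ Finset.range N, seq x y n) / N with havg
    have havgbd : ∀ x y N, |avg x y N| ≤ ‖x‖ * ‖y‖ := by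
      intro x y N
      rcases Nat.eq_zero_or_pos N with hN | hN
      · simp [havg, hN]
        positivity
      · have h1 : |∑ n ∈ Finset.range N, seq x y n| ≤ N * (‖x‖ * ‖y‖) := by
          calc |∑ n ∈ Finset.range N, seq x y n|
              ≤ ∑ n ∈ Finset.range N, |seq x y n| :=
                Finset.abs_sum_le_sum_abs _ _
            _ ≤ ∑ _n ∈ Finset.range N, (‖x‖ * ‖y‖) :=
                Finset.sum_le_sum fun n _ => hseqbd x y n
            _ = N * (‖x‖ * ‖y‖) := by simp [mul_comm]
        have hNpos : (0 : ℝ) < N := by exact_mod_cast hN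
        rw [havg, abs_div, abs_of_pos hNpos, div_le_iff₀ hNpos]
        calc |∑ n ∈ Finset.range N, seq x y n| ≤ N * (‖x‖ * ‖y‖) := h1
          _ = ‖x‖ * ‖y‖ * N := by ring
    -- an ultrafilter extending atTop
    obtain ⟨φ, hφ⟩ := Filter.exists_ultrafilter_le (atTop : Filter ℕ)
    -- limits along φ exist
    have key : ∀ x y : V, ∃ L : ℝ, Tendsto (avg x y) ↑φ (𝓝 L) := by
      intro x y
      have hc : IsCompact (Set.Icc (-(‖x‖ * ‖y‖)) (‖x‖ * ‖y‖)) := isCompact_Icc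
      have hmem : ∀ N, avg x y N ∈ Set.Icc (-(‖x‖ * ‖y‖)) (‖x‖ * ‖y‖) := by
        intro N
        exact abs_le.mp (havgbd x y N)
      have hle : ↑(φ.map (avg x y)) ≤ 𝓟 (Set.Icc (-(‖x‖ * ‖y‖)) (‖x‖ * ‖y‖)) := by
        rw [le_principal_iff]
        exact Filter.mem_map.mpr (Filter.Eventually.of_forall hmem)
      obtain ⟨L, _, hL⟩ := hc.ultrafilter_le_nhds (φ.map (avg x y)) hle
      exact ⟨L, hL⟩
    choose sip hsip using key
    have hNB : (↑φ : Filter ℕ).NeBot := φ.neBot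
    refine ⟨sip, ?_, ?_, ?_, ?_, ?_⟩
    · -- additivity
      intro x y z
      have h1 : Tendsto (avg (x + y) z) ↑φ (𝓝 (sip x z + sip y z)) := by
        have : avg (x + y) z = fun N => avg x z N + avg y z N := by
          funext N
          simp only [havg, hseqadd, Finset.sum_add_distrib, add_div]
        rw [this]
        exact (hsip x z).add (hsip y z)
      exact tendsto_nhds_unique (hsip (x + y) z) h1
    · -- homogeneity
      intro c x y
      have h1 : Tendsto (avg (c • x) y) ↑φ (𝓝 (c * sip x y)) := by
        have : avg (c • x) y = fun N => c * avg x y N := by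
          funext N
          simp only [havg, hseqsmul, ← Finset.mul_sum, mul_div_assoc]
        rw [this]
        exact (hsip x y).const_mul c
      exact tendsto_nhds_unique (hsip (c • x) y) h1
    · -- norm
      intro x
      have h1 : Tendsto (avg x x) ↑φ (𝓝 (‖x‖ ^ 2)) := by
        have hev : avg x x =ᶠ[(↑φ : Filter ℕ)] fun _ => ‖x‖ ^ 2 := by
          apply Filter.mem_of_superset (hφ (Filter.eventually_ge_atTop 1))
          intro N hN
          have hN' : (N : ℝ) ≠ 0 := by
            have hN1 : 1 ≤ N := hN
            exact_mod_cast Nat.one_le_iff_ne_zero.mp hN1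
          simp only [havg, hseqself, Finset.sum_const, Finset.card_range,
            nsmul_eq_mul]
          show (N : ℝ) * ‖x‖ ^ 2 / N = ‖x‖ ^ 2
          field_simp
        exact Tendsto.congr' hev.symm tendsto_const_nhds
      exact tendsto_nhds_unique (hsip x x) h1
    · -- bound
      intro x y
      have h1 : Tendsto (fun N => |avg x y N|) ↑φ (𝓝 |sip x y|) := (hsip x y).abs
      exact le_of_tendsto h1 (Filter.Eventually.of_forall (havgbd x y))
    · -- U-invariance
      intro x y
      have hform : ∀ N, avg (U x) (U y) N
          = avg x y N + (seq x y N - seq x y 0) / N := by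
        intro N
        have h1 : (∑ n ∈ Finset.range N, seq (U x) (U y) n)
            = (∑ n ∈ Finset.range N, seq x y n) + seq x y N - seq x y 0 := by
          have h2 : (∑ n ∈ Finset.range N, seq x y (n + 1))
              = (∑ n ∈ Finset.range (N + 1), seq x y n) - seq x y 0 := by
            rw [Finset.sum_range_succ' (seq x y) N]
            ring
          calc (∑ n ∈ Finset.range N, seq (U x) (U y) n)
              = ∑ n ∈ Finset.range N, seq x y (n + 1) := by
                exact Finset.sum_congr rfl fun n _ => hseqshift x y n
            _ = (∑ n ∈ Finset.range (N + 1), seq x y n) - seq x y 0 := h2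
            _ = (∑ n ∈ Finset.range N, seq x y n) + seq x y N - seq x y 0 := by
                rw [Finset.sum_range_succ]
        simp only [havg, h1]
        ring
      have hdiff : Tendsto (fun N => (seq x y N - seq x y 0) / N) ↑φ (𝓝 0) := by
        have hbd0 : ∀ N : ℕ, |(seq x y N - seq x y 0) / N|
            ≤ (2 * (‖x‖ * ‖y‖)) / N := by
          intro N
          rcases Nat.eq_zero_or_pos N with hN | hN
          · simp [hN]
          · have hNpos : (0 : ℝ) < N := by exact_mod_cast hN
            rw [abs_div, abs_of_pos hNpos]
            gcongr
            calc |seq x y N - seq x y 0| ≤ |seq x y N| + |seq x y 0| :=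
                abs_sub _ _
              _ ≤ (‖x‖ * ‖y‖) + (‖x‖ * ‖y‖) := by
                  exact add_le_add (hseqbd x y N) (hseqbd x y 0)
              _ = 2 * (‖x‖ * ‖y‖) := by ring
        have hto : Tendsto (fun N : ℕ => (2 * (‖x‖ * ‖y‖)) / (N : ℝ)) atTop (𝓝 0) :=
          tendsto_const_div_atTop_nhds_zero_nat _
        have hto' : Tendsto (fun N : ℕ => (2 * (‖x‖ * ‖y‖)) / (N : ℝ)) ↑φ (𝓝 0) :=
          hto.mono_left hφ
        exact squeeze_zero_norm
          (fun N => by rw [Real.norm_eq_abs]; exact hbd0 N) hto'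
      have h1 : Tendsto (avg (U x) (U y)) ↑φ (𝓝 (sip x y + 0)) := by
        have : avg (U x) (U y)
            = fun N => avg x y N + (seq x y N - seq x y 0) / N := funext hform
        rw [this]
        exact (hsip x y).add hdiff
      rw [add_zero] at h1
      exact tendsto_nhds_unique (hsip (U x) (U y)) h1
  · rintro ⟨sip, _, _, hself, _, hpres⟩ x
    have h1 : ‖U x‖ ^ 2 = ‖x‖ ^ 2 := by
      rw [← hself (U x), hpres, hself]
    nlinarith [norm_nonneg (U x), norm_nonneg x, sq_nonneg (‖U x‖ - ‖x‖)]
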